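/- Fix λ ∈ (0,1) and positive constants λ_1, λ_2. Among all A ≥ 0, B ≥ 0 satisfying (A + B + 1)/(A + B + AB + 1) = λ, the function f(A,B) = A/λ_1 + B/λ_2 is minimized at A = (1-λ)/λ + √(λ_1/λ_2)·√(1-λ)/λ and B = (1-λ)/λ + √(λ_2/λ_1)·√(1-λ)/λ. -/

import Mathlib

open Real

theorem stmt_1 (lam l1 l2 : ℝ) (hlam : lam ∈ Set.Ioo (0:ℝ) 1)
    (h1 : 0 < l1) (h2 : 0 < l2) :
    let A0 := (1 - lam) / lam + Real.sqrt (l1 / l2) * Real.sqrt (1 - lam) / lam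
    let B0 := (1 - lam) / lam + Real.sqrt (l2 / l1) * Real.sqrt (1 - lam) / lam
    0 ≤ A0 ∧ 0 ≤ B0 ∧
      (A0 + B0 + 1) / (A0 + B0 + A0 * B0 + 1) = lam ∧
      ∀ A B : ℝ, 0 ≤ A → 0 ≤ B →
        (A + B + 1) / (A + B + A * B + 1) = lam →
        A0 / l1 + B0 / l2 ≤ A / l1 + B / l2 := by
  obtain ⟨hl0, hl1⟩ := hlam
  intro A0 B0
  have hμ0 : (0:ℝ) < 1 - lam := by linarith
  set a := Real.sqrt (l1 / l2) with hadef
  set b := Real.sqrt (l2 / l1) with hbdef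
  set m := Real.sqrt (1 - lam) with hmdef
  have hm2 : m ^ 2 = 1 - lam := Real.sq_sqrt hμ0.le
  have hm0 : 0 ≤ m := Real.sqrt_nonneg _
  have ha0 : 0 ≤ a := Real.sqrt_nonneg _
  have hb0 : 0 ≤ b := Real.sqrt_nonneg _
  have hab : a * b = 1 := by
    rw [hadef, hbdef, ← Real.sqrt_mul (by positivity)]
    rw [show l1 / l2 * (l2 / l1) = 1 by field_simp]
    exact Real.sqrt_one
  have hA0 : A0 = ((1 - lam) + a * m) / lam := by
    show (1 - lam) / lam + a * m / lam = _; ring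
  have hB0 : B0 = ((1 - lam) + b * m) / lam := by
    show (1 - lam) / lam + b * m / lam = _; ring
  have hA0nn : 0 ≤ A0 := by rw [hA0]; positivity
  have hB0nn : 0 ≤ B0 := by rw [hB0]; positivity
  refine ⟨hA0nn, hB0nn, ?_, ?_⟩
  · have hden : 0 < A0 + B0 + A0 * B0 + 1 := by positivity
    rw [div_eq_iff hden.ne']
    rw [hA0, hB0]
    field_simp
    linear_combination (-m ^ 2) * hab + (-1) * hm2
  · intro A B hA hB hcon
    have hden : 0 < A + B + A * B + 1 := by positivity
    rw [div_eq_iff hden.ne'] at hcon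
    set u := lam * A - (1 - lam) with hudef
    set v := lam * B - (1 - lam) with hvdef
    have huv : u * v = 1 - lam := by
      rw [hudef, hvdef]; linear_combination (-lam) * hcon
    have hul : -(1 - lam) ≤ u := by
      have : 0 ≤ lam * A := mul_nonneg hl0.le hA
      rw [hudef]; linarith
    have hvl : -(1 - lam) ≤ v := by
      have : 0 ≤ lam * B := mul_nonneg hl0.le hB
      rw [hvdef]; linarith
    have hu : 0 < u := by
      by_contra h
      push_neg at h
      have hv' : v < 0 := by nlinarith
      nlinarith [mul_nonneg (by linarith : (0:ℝ) ≤ (1 - lam) + u) (by linarith : (0:ℝ) ≤ -v)]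
    have hv : 0 < v := by
      by_contra h
      push_neg at h
      nlinarith
    have hsl1 : 0 < Real.sqrt l1 := Real.sqrt_pos.mpr h1
    have hsl2 : 0 < Real.sqrt l2 := Real.sqrt_pos.mpr h2
    have hl1s : Real.sqrt l1 * Real.sqrt l1 = l1 := Real.mul_self_sqrt h1.le
    have hl2s : Real.sqrt l2 * Real.sqrt l2 = l2 := Real.mul_self_sqrt h2.le
    have hal : a * Real.sqrt l2 = Real.sqrt l1 := by
      rw [hadef, Real.sqrt_div h1.le, div_mul_cancel₀ _ hsl2.ne']
    have hbl : b * Real.sqrt l1 = Real.sqrt l2 := by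
      rw [hbdef, Real.sqrt_div h2.le, div_mul_cancel₀ _ hsl1.ne']
    -- key AM-GM inequality
    have e3 : Real.sqrt (u / l1) * Real.sqrt (v / l2) = m / (Real.sqrt l1 * Real.sqrt l2) := by
      rw [← Real.sqrt_mul (div_nonneg hu.le h1.le)]
      rw [show u / l1 * (v / l2) = (1 - lam) / (l1 * l2) by rw [← huv]; ring]
      rw [Real.sqrt_div hμ0.le, Real.sqrt_mul h1.le, ← hmdef]
    have e1 : Real.sqrt (u / l1) ^ 2 = u / l1 := Real.sq_sqrt (div_nonneg hu.le h1.le)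
    have e2 : Real.sqrt (v / l2) ^ 2 = v / l2 := Real.sq_sqrt (div_nonneg hv.le h2.le)
    have hexp : (Real.sqrt (u / l1) - Real.sqrt (v / l2)) ^ 2
        = u / l1 + v / l2 - 2 * (m / (Real.sqrt l1 * Real.sqrt l2)) := by
      rw [sub_sq, e1, e2, mul_assoc, e3]
      ring
    have key : 2 * (m / (Real.sqrt l1 * Real.sqrt l2)) ≤ u / l1 + v / l2 := by
      have hsq := sq_nonneg (Real.sqrt (u / l1) - Real.sqrt (v / l2))
      rw [hexp] at hsq
      linarith
    have ham : a * m / l1 = m / (Real.sqrt l1 * Real.sqrt l2) := by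
      rw [div_eq_div_iff h1.ne' (by positivity)]
      calc a * m * (Real.sqrt l1 * Real.sqrt l2) = m * ((a * Real.sqrt l2) * Real.sqrt l1) := by ring
        _ = m * l1 := by rw [hal, hl1s]
    have hbm : b * m / l2 = m / (Real.sqrt l1 * Real.sqrt l2) := by
      rw [div_eq_div_iff h2.ne' (by positivity)]
      calc b * m * (Real.sqrt l1 * Real.sqrt l2) = m * ((b * Real.sqrt l1) * Real.sqrt l2) := by ring
        _ = m * l2 := by rw [hbl, hl2s]
    have expand : A / l1 + B / l2 - (A0 / l1 + B0 / l2)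
        = (u / l1 + v / l2 - (a * m / l1 + b * m / l2)) / lam := by
      rw [hA0, hB0, hudef, hvdef]
      field_simp
      ring
    have hnn : 0 ≤ A / l1 + B / l2 - (A0 / l1 + B0 / l2) := by
      rw [expand]
      apply div_nonneg _ hl0.le
      rw [ham, hbm]
      linarith
    linarith
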